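/- Downward closure lemma: for k ≥ 2, L_k ⊆ C_k, where L_k is the set of frequent itemsets of size k and C_k = { a ∪ {b} : a ∈ L_{k-1}, b ∈ ⋃ L_{k-1}, b ∉ a } is the set of candidate itemsets obtained by extending frequent itemsets of size k−1 by a single element occurring in some frequent itemset of size k−1. -/
import Mathlib


/-- Support of an itemset `I` in a basket set `D`. -/
noncomputable def supp {α : Type*} [DecidableEq α] (D : Finset (Finset α)) (I : Finset α) : ℝ :=
  (D.filter (fun t => I ⊆ t)).card / D.card

/-- The set of frequent itemsets of size `k`. -/
noncomputable def L {α : Type*} [DecidableEq α] (D : Finset (Finset α)) (rf : ℝ) (k : ℕ) :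
    Set (Finset α) :=
  {I | I.card = k ∧ rf ≤ supp D I}

/-- Support is antitone with respect to the subset relation. -/
lemma supp_anti {α : Type*} [DecidableEq α] (D : Finset (Finset α)) {I I' : Finset α}
    (h : I' ⊆ I) : supp D I ≤ supp D I' := by
  unfold supp
  have hc : ((D.filter fun t => I ⊆ t).card : ℝ) ≤ (D.filter fun t => I' ⊆ t).card := by
    have hsub : (D.filter fun t => I ⊆ t) ⊆ D.filter fun t => I' ⊆ t := by
      intro t ht
      simp only [Finset.mem_filter] at *
      exact ⟨ht.1, h.trans ht.2⟩
    exact_mod_cast Finset.card_le_card hsub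
  gcongr

/-- Downward closure lemma: every frequent itemset of size `k ≥ 2` arises as a frequent
itemset of size `k-1` extended by one element occurring in some frequent itemset of
size `k-1`. -/
theorem downward_closure {α : Type*} [DecidableEq α] (D : Finset (Finset α))
    (hD : D.Nonempty) (rf : ℝ) (k : ℕ) (hk : 2 ≤ k) :
    L D rf k ⊆ {c : Finset α | ∃ a ∈ L D rf (k - 1), ∃ b,
      (∃ J ∈ L D rf (k - 1), b ∈ J) ∧ b ∉ a ∧ c = insert b a} := by
  intro I hI
  obtain ⟨hcard, hsupp⟩ := hI
  have h2 : 1 < I.card := by omega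
  obtain ⟨b, hb, b', hb', hne⟩ := Finset.one_lt_card.mp h2
  refine ⟨I.erase b, ⟨?_, hsupp.trans (supp_anti D (Finset.erase_subset _ _))⟩,
    b, ⟨I.erase b', ⟨?_, hsupp.trans (supp_anti D (Finset.erase_subset _ _))⟩,
      Finset.mem_erase.mpr ⟨hne, hb⟩⟩, Finset.notMem_erase _ _, ?_⟩
  · rw [Finset.card_erase_of_mem hb, hcard]
  · rw [Finset.card_erase_of_mem hb', hcard]
  · rw [Finset.insert_erase hb]
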